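/- Quantum Chernoff bound (Audenaert et al.): For all d×d complex positive semidefinite matrices A and B and every s ∈ [0,1], (1/2)·(Tr[A] + Tr[B] − ‖A − B‖₁) ≤ Tr[A^s B^{1−s}]; equivalently, (1/2)·(Tr[A+B] − ‖A−B‖₁) ≤ Q_min(A‖B). -/

import Mathlib

open scoped ComplexOrder Classical

noncomputable section

namespace QHT

variable {ι : Type*} [Fintype ι] [DecidableEq ι]

/-- The former `Matrix.PosSemidef.sqrt` (removed from Mathlib), with its old definition. -/
def psdSqrt {A : Matrix ι ι ℂ} (hA : A.PosSemidef) : Matrix ι ι ℂ :=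
  (hA.1.eigenvectorUnitary : Matrix ι ι ℂ) *
    Matrix.diagonal ((↑) ∘ (Real.sqrt ·) ∘ hA.1.eigenvalues) *
    (star hA.1.eigenvectorUnitary : Matrix ι ι ℂ)

/-- Trace norm of a complex matrix: `Tr[√(Aᴴ A)]`. -/
def traceNorm (A : Matrix ι ι ℂ) : ℝ :=
  ((psdSqrt (Matrix.posSemidef_conjTranspose_mul_self A)).trace).re

/-- A quantum state: positive semidefinite with unit trace. -/
def IsState (ρ : Matrix ι ι ℂ) : Prop := ρ.PosSemidef ∧ ρ.trace = 1

/-- Positive semidefinite square root (junk value `0` off the PSD matrices). -/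
def matSqrt (A : Matrix ι ι ℂ) : Matrix ι ι ℂ :=
  if h : A.PosSemidef then psdSqrt h else 0

/-- Real power of a Hermitian matrix, applying `x ↦ x ^ s` to positive
eigenvalues and `x ↦ 0` to the remaining ones (so `A ^ 0` is the support
projection); junk value `0` off the Hermitian matrices. -/
def matRpow (A : Matrix ι ι ℂ) (s : ℝ) : Matrix ι ι ℂ :=
  if h : A.IsHermitian then
    (h.eigenvectorUnitary : Matrix ι ι ℂ) *
      Matrix.diagonal (fun i =>
        ((if 0 < h.eigenvalues i then (h.eigenvalues i) ^ s else 0 : ℝ) : ℂ)) *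
      (star (h.eigenvectorUnitary : Matrix ι ι ℂ))
  else 0

/-- Fidelity `F(ρ,σ) = ‖√ρ √σ‖₁²`. -/
def Fid (ρ σ : Matrix ι ι ℂ) : ℝ := (traceNorm (matSqrt ρ * matSqrt σ)) ^ 2

/-- Holevo fidelity `F_H(ρ,σ) = (Tr[√ρ √σ])²`. -/
def FidH (ρ σ : Matrix ι ι ℂ) : ℝ := (((matSqrt ρ * matSqrt σ).trace).re) ^ 2

/-- `Q_s(A‖B) = Tr[A^s B^{1-s}]`. -/
def Qs (s : ℝ) (A B : Matrix ι ι ℂ) : ℝ := ((matRpow A s * matRpow B (1 - s)).trace).re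

/-- `Q_min(A‖B) = min_{s ∈ [0,1]} Q_s(A‖B)`. -/
def Qmin (A B : Matrix ι ι ℂ) : ℝ :=
  sInf { x : ℝ | ∃ s ∈ Set.Icc (0 : ℝ) 1, x = Qs s A B }

/-- Bures distance. -/
def dB (ρ σ : Matrix ι ι ℂ) : ℝ := Real.sqrt (2 * (1 - Real.sqrt (Fid ρ σ)))

/-- Quantum Hellinger distance. -/
def dH (ρ σ : Matrix ι ι ℂ) : ℝ := Real.sqrt (2 * (1 - Real.sqrt (FidH ρ σ)))

/-- `n`-fold Kronecker (tensor) power of a matrix. -/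
def tensorPow {d : ℕ} (A : Matrix (Fin d) (Fin d) ℂ) (n : ℕ) :
    Matrix (Fin n → Fin d) (Fin n → Fin d) ℂ :=
  Matrix.of fun i j => ∏ k, A (i k) (j k)

/-- Optimal error probability of symmetric binary quantum hypothesis testing
with `n` copies. -/
def pErr {d : ℕ} (p : ℝ) (ρ : Matrix (Fin d) (Fin d) ℂ) (q : ℝ)
    (σ : Matrix (Fin d) (Fin d) ℂ) (n : ℕ) : ℝ :=
  sInf { x : ℝ | ∃ Λ : Matrix (Fin n → Fin d) (Fin n → Fin d) ℂ,
    Λ.PosSemidef ∧ (1 - Λ).PosSemidef ∧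
    x = p * (((1 - Λ) * tensorPow ρ n).trace).re + q * ((Λ * tensorPow σ n).trace).re }

/-- Sample complexity of symmetric binary quantum hypothesis testing. -/
def sampleComplexity {d : ℕ} (p : ℝ) (ρ : Matrix (Fin d) (Fin d) ℂ) (q : ℝ)
    (σ : Matrix (Fin d) (Fin d) ℂ) (ε : ℝ) : ℕ :=
  sInf { n : ℕ | 1 ≤ n ∧ pErr p ρ q σ n ≤ ε }

/-- Optimal type II error `β_ε(ρ‖σ)` of asymmetric hypothesis testing. -/
def betaErr (ε : ℝ) (ρ σ : Matrix ι ι ℂ) : ℝ :=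
  sInf { x : ℝ | ∃ Λ : Matrix ι ι ℂ, Λ.PosSemidef ∧ (1 - Λ).PosSemidef ∧
    (((1 - Λ) * ρ).trace).re ≤ ε ∧ x = ((Λ * σ).trace).re }

/-- Sample complexity of asymmetric binary quantum hypothesis testing. -/
def sampleComplexityAsym {d : ℕ} (ρ σ : Matrix (Fin d) (Fin d) ℂ) (ε δ : ℝ) : ℕ :=
  sInf { n : ℕ | 1 ≤ n ∧ betaErr ε (tensorPow ρ n) (tensorPow σ n) ≤ δ }

/-- Petz–Rényi divergence `D_α(ρ‖σ)`. -/
def petzRenyi (α : ℝ) (ρ σ : Matrix ι ι ℂ) : ℝ :=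
  (1 / (α - 1)) * Real.log (((matRpow ρ α * matRpow σ (1 - α)).trace).re)

/-- Sandwiched Rényi divergence `D̃_α(ρ‖σ)`. -/
def sandwichedRenyi (α : ℝ) (ρ σ : Matrix ι ι ℂ) : ℝ :=
  (1 / (α - 1)) * Real.log
    (((matRpow (matRpow σ ((1 - α) / (2 * α)) * ρ * matRpow σ ((1 - α) / (2 * α))) α).trace).re)




namespace CFC
open Matrix

variable {A : Matrix ι ι ℂ} (hA : A.IsHermitian)

lemma star_mul_self : star (hA.eigenvectorUnitary : Matrix ι ι ℂ) * (hA.eigenvectorUnitary : Matrix ι ι ℂ) = 1 :=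
  Unitary.coe_star_mul_self hA.eigenvectorUnitary

lemma cfc_mul (f g : ℝ → ℝ) : hA.cfc f * hA.cfc g = hA.cfc (fun x => f x * g x) := by
  simp only [Matrix.IsHermitian.cfc, Unitary.conjStarAlgAut_apply]
  have h1 : ∀ (X Y Z W V T : Matrix ι ι ℂ), (X * Y * Z) * (W * V * T) = X * (Y * ((Z * W) * V)) * T := by
    intros; simp only [mul_assoc]
  rw [h1, star_mul_self hA, one_mul, diagonal_mul_diagonal]
  have hd : (fun i => ((RCLike.ofReal : ℝ → ℂ) ∘ f ∘ hA.eigenvalues) i * ((RCLike.ofReal : ℝ → ℂ) ∘ g ∘ hA.eigenvalues) i)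
      = ((RCLike.ofReal : ℝ → ℂ) ∘ (fun x => f x * g x) ∘ hA.eigenvalues) := by
    funext i; simp [Function.comp]
  rw [hd]

lemma cfc_herm (f : ℝ → ℝ) : (hA.cfc f).IsHermitian := by
  simp only [Matrix.IsHermitian.cfc, Unitary.conjStarAlgAut_apply, Matrix.IsHermitian, star_eq_conjTranspose]
  simp only [conjTranspose_mul, conjTranspose_conjTranspose, diagonal_conjTranspose]
  rw [mul_assoc]
  have hd : star ((RCLike.ofReal : ℝ → ℂ) ∘ f ∘ hA.eigenvalues) = ((RCLike.ofReal : ℝ → ℂ) ∘ f ∘ hA.eigenvalues) := by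
    funext i; simp [Pi.star_def, Function.comp]
  rw [hd]

lemma cfc_psd (f : ℝ → ℝ) (hf : ∀ i, 0 ≤ f (hA.eigenvalues i)) : (hA.cfc f).PosSemidef := by
  have hd : (Matrix.diagonal (RCLike.ofReal ∘ f ∘ hA.eigenvalues) : Matrix ι ι ℂ).PosSemidef := by
    refine Matrix.PosSemidef.diagonal ?_
    intro i
    simpa using Complex.zero_le_real.mpr (hf i)
  simpa only [Matrix.IsHermitian.cfc, Unitary.conjStarAlgAut_apply, star_eq_conjTranspose] using
    hd.mul_mul_conjTranspose_same (hA.eigenvectorUnitary : Matrix ι ι ℂ)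

lemma cfc_trace (f : ℝ → ℝ) : (hA.cfc f).trace = ((∑ i, f (hA.eigenvalues i) : ℝ) : ℂ) := by
  simp only [Matrix.IsHermitian.cfc, Unitary.conjStarAlgAut_apply]
  rw [Matrix.trace_mul_cycle, star_mul_self hA, one_mul, Matrix.trace_diagonal]
  push_cast
  rfl

lemma cfc_id : hA.cfc (fun x => x) = A := by
  simpa only [Matrix.IsHermitian.cfc, Function.comp_def] using hA.spectral_theorem.symm

lemma cfc_congr {f g : ℝ → ℝ} (h : ∀ i, f (hA.eigenvalues i) = g (hA.eigenvalues i)) :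
    hA.cfc f = hA.cfc g := by
  simp only [Matrix.IsHermitian.cfc]
  have hd : ((RCLike.ofReal : ℝ → ℂ) ∘ f ∘ hA.eigenvalues) = ((RCLike.ofReal : ℝ → ℂ) ∘ g ∘ hA.eigenvalues) := by
    funext i; simp [Function.comp, h i]
  rw [hd]

lemma cfc_sub (f g : ℝ → ℝ) : hA.cfc f - hA.cfc g = hA.cfc (fun x => f x - g x) := by
  simp only [Matrix.IsHermitian.cfc, Unitary.conjStarAlgAut_apply, ← Matrix.sub_mul, ← Matrix.mul_sub, diagonal_sub]
  have hd : (fun i => ((RCLike.ofReal : ℝ → ℂ) ∘ f ∘ hA.eigenvalues) i - ((RCLike.ofReal : ℝ → ℂ) ∘ g ∘ hA.eigenvalues) i)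
      = ((RCLike.ofReal : ℝ → ℂ) ∘ (fun x => f x - g x) ∘ hA.eigenvalues) := by
    funext i; simp [Function.comp]
  rw [hd]

lemma cfc_one : hA.cfc (fun _ => 1) = 1 := by
  simp only [Matrix.IsHermitian.cfc, Unitary.conjStarAlgAut_apply]
  have : (Matrix.diagonal (RCLike.ofReal ∘ (fun _ => (1:ℝ)) ∘ hA.eigenvalues) : Matrix ι ι ℂ) = 1 := by
    rw [← Matrix.diagonal_one]
    have hd : ((RCLike.ofReal : ℝ → ℂ) ∘ (fun _ => (1:ℝ)) ∘ hA.eigenvalues) = fun _ => (1:ℂ) := by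
      funext i; simp [Function.comp]
    rw [hd]
  rw [this, mul_one]
  exact Unitary.coe_mul_star_self hA.eigenvectorUnitary

end CFC

section PsdSqrt
open scoped MatrixOrder
open Matrix CFC

lemma psdSqrt_eq_cfc {M : Matrix ι ι ℂ} (h : M.PosSemidef) : psdSqrt h = h.1.cfc Real.sqrt := by
  simp only [psdSqrt, Matrix.IsHermitian.cfc, Unitary.conjStarAlgAut_apply]
  rfl

lemma psdSqrt_psd {M : Matrix ι ι ℂ} (h : M.PosSemidef) : (psdSqrt h).PosSemidef := by
  rw [psdSqrt_eq_cfc]; exact cfc_psd h.1 _ (fun i => Real.sqrt_nonneg _)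

lemma psdSqrt_mul_self {M : Matrix ι ι ℂ} (h : M.PosSemidef) : psdSqrt h * psdSqrt h = M := by
  rw [psdSqrt_eq_cfc, QHT.CFC.cfc_mul, QHT.CFC.cfc_congr h.1 (g := fun x => x)
    (fun i => Real.mul_self_sqrt (h.eigenvalues_nonneg i)), QHT.CFC.cfc_id]

lemma eq_psdSqrt_of_sq_eq {M B : Matrix ι ι ℂ} (hB : B.PosSemidef) (h : M.PosSemidef)
    (hsq : B ^ 2 = M) : B = psdSqrt h := by
  have e1 : CFC.sqrt M = B := (CFC.sqrt_eq_iff M B h.nonneg hB.nonneg).2 (by rw [← sq]; exact hsq)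
  have e2 : CFC.sqrt M = psdSqrt h :=
    (CFC.sqrt_eq_iff M _ h.nonneg (psdSqrt_psd h).nonneg).2 (psdSqrt_mul_self h)
  rw [← e1, e2]

end PsdSqrt

namespace CFC
open Matrix

variable {A : Matrix ι ι ℂ} (hA : A.IsHermitian)

/-- weights of a vector w.r.t. the eigenbasis -/
def wt (hA : A.IsHermitian) (v : ι → ℂ) (i : ι) : ℝ :=
  Complex.normSq ((star (hA.eigenvectorUnitary : Matrix ι ι ℂ) *ᵥ v) i)

lemma wt_nonneg (v : ι → ℂ) (i : ι) : 0 ≤ wt hA v i := Complex.normSq_nonneg _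

lemma cfc_qf (f : ℝ → ℝ) (v : ι → ℂ) :
    dotProduct (star v) (hA.cfc f *ᵥ v) =
      ((∑ i, f (hA.eigenvalues i) * wt hA v i : ℝ) : ℂ) := by
  set U : Matrix ι ι ℂ := (hA.eigenvectorUnitary : Matrix ι ι ℂ) with hU
  set w : ι → ℂ := star U *ᵥ v with hw
  have h1 : hA.cfc f *ᵥ v = U *ᵥ ((Matrix.diagonal (RCLike.ofReal ∘ f ∘ hA.eigenvalues)) *ᵥ w) := by
    simp only [Matrix.IsHermitian.cfc, Unitary.conjStarAlgAut_apply, hw, Matrix.mulVec_mulVec, hU, Matrix.mul_assoc]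
  rw [h1, Matrix.dotProduct_mulVec, show star v ᵥ* U = star w by
    rw [hw, Matrix.star_mulVec, Matrix.star_eq_conjTranspose, Matrix.conjTranspose_conjTranspose]]
  rw [dotProduct, Complex.ofReal_sum]
  refine Finset.sum_congr rfl fun i _ => ?_
  rw [Matrix.mulVec_diagonal]
  have h3 : (star w) i * ((RCLike.ofReal ∘ f ∘ hA.eigenvalues) i * w i)
      = ((f (hA.eigenvalues i) : ℂ)) * ((starRingEnd ℂ) (w i) * w i) := by
    simp only [Pi.star_apply, Function.comp_apply, Complex.star_def,
      show (RCLike.ofReal : ℝ → ℂ) = Complex.ofReal from rfl]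
    ring
  rw [h3, ← Complex.normSq_eq_conj_mul_self, wt]
  push_cast
  ring

lemma posSemidef_of_qf {M : Matrix ι ι ℂ} (hM : M.IsHermitian)
    (h : ∀ v : ι → ℂ, 0 ≤ dotProduct (star v) (M *ᵥ v)) : M.PosSemidef := PosSemidef.of_dotProduct_mulVec_nonneg hM h

end CFC

open Matrix CFC

lemma matRpow_eq {A : Matrix ι ι ℂ} (hA : A.IsHermitian) (s : ℝ) :
    matRpow A s = hA.cfc (fun x => if 0 < x then x ^ s else 0) := by
  rw [matRpow, dif_pos hA]
  rfl

lemma psd_trace_re_nonneg {M : Matrix ι ι ℂ} (hM : M.PosSemidef) : 0 ≤ (M.trace).re := by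
  rw [Matrix.trace]
  have : ∀ i, 0 ≤ (M.diag i).re := by
    intro i
    have h0 := hM.dotProduct_mulVec_nonneg (Pi.single i 1)
    rw [Complex.le_def] at h0
    have hv : dotProduct (star (Pi.single i 1)) (M *ᵥ Pi.single i 1) = M i i := by
      simp [dotProduct, Matrix.mulVec_single, Pi.single_apply, ite_mul, mul_ite]
    rw [hv] at h0
    exact h0.1
  rw [Complex.re_sum]
  exact Finset.sum_nonneg fun i _ => this i

lemma trace_mul_psd_nonneg {P Q : Matrix ι ι ℂ} (hP : P.PosSemidef) (hQ : Q.PosSemidef) :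
    0 ≤ ((P * Q).trace).re := by
  have hS := psdSqrt_psd hP
  have h1 : P * Q = psdSqrt hP * (psdSqrt hP * Q) := by rw [← mul_assoc, psdSqrt_mul_self hP]
  rw [h1, Matrix.trace_mul_comm]
  have h2 : psdSqrt hP * Q * psdSqrt hP = psdSqrt hP * Q * (psdSqrt hP)ᴴ := by
    rw [hS.1]
  rw [h2]
  exact psd_trace_re_nonneg (hQ.mul_mul_conjTranspose_same (psdSqrt hP))

lemma trace_re_mono {X Y P : Matrix ι ι ℂ} (hXY : (Y - X).PosSemidef) (hP : P.PosSemidef) :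
    ((X * P).trace).re ≤ ((Y * P).trace).re := by
  have := trace_mul_psd_nonneg hXY hP
  rw [Matrix.sub_mul, Matrix.trace_sub, Complex.sub_re] at this
  linarith

namespace CFC
open Matrix
variable {A : Matrix ι ι ℂ} (hA : A.IsHermitian)

lemma cfc_const (c : ℝ) : hA.cfc (fun _ => c) = (c:ℂ) • 1 := by
  simp only [Matrix.IsHermitian.cfc, Unitary.conjStarAlgAut_apply]
  have hd : (Matrix.diagonal (RCLike.ofReal ∘ (fun _ => c) ∘ hA.eigenvalues) : Matrix ι ι ℂ)
      = (c:ℂ) • 1 := by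
    ext i j
    by_cases h : i = j <;> simp [Matrix.diagonal_apply, Matrix.one_apply, h]
  rw [hd, mul_smul_comm, smul_mul_assoc, mul_one]
  congr 1
  exact Matrix.mem_unitaryGroup_iff.mp hA.eigenvectorUnitary.2

lemma cfc_shift (t : ℝ) : hA.cfc (fun x => x + t) = A + (t:ℂ) • 1 := by
  have h := cfc_sub hA (fun x => x + t) (fun _ => t)
  simp only [add_sub_cancel_right] at h
  rw [cfc_id hA, cfc_const hA] at h
  exact (sub_eq_iff_eq_add.mp h)

/-- Cauchy–Schwarz for a PSD sesquilinear form. -/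
lemma cs {M : Matrix ι ι ℂ} (hM : M.PosSemidef) (x y : ι → ℂ) :
    ((dotProduct (star x) (M *ᵥ y)).re) ^ 2 ≤
      (dotProduct (star x) (M *ᵥ x)).re * (dotProduct (star y) (M *ᵥ y)).re := by
  set S := psdSqrt hM with hSdef
  have hSS : S * S = M := psdSqrt_mul_self hM
  have hSh : S.IsHermitian := (psdSqrt_psd hM).1
  have key : ∀ u v : ι → ℂ, dotProduct (star u) (M *ᵥ v)
      = dotProduct (star (S *ᵥ u)) (S *ᵥ v) := by
    intro u v
    rw [Matrix.star_mulVec, ← hSS, ← Matrix.mulVec_mulVec, Matrix.dotProduct_mulVec, hSh.eq]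
  rw [key x y, key x x, key y y]
  set a := S *ᵥ x
  set b := S *ᵥ y
  set a' := (WithLp.equiv 2 (ι → ℂ)).symm a with ha'
  set b' := (WithLp.equiv 2 (ι → ℂ)).symm b with hb'
  have h1 : (inner ℂ a' b') = dotProduct (star a) b :=
    by rw [dotProduct_comm]; rfl
  have h2 : (inner ℂ a' a') = dotProduct (star a) a :=
    by rw [dotProduct_comm]; rfl
  have h3 : (inner ℂ b' b') = dotProduct (star b) b :=
    by rw [dotProduct_comm]; rfl
  rw [← h1, ← h2, ← h3]
  have h4 : ‖(inner ℂ a' b')‖ ≤ ‖a'‖ * ‖b'‖ := norm_inner_le_norm a' b'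
  have h6 : ((inner ℂ a' a')).re = ‖a'‖ ^ 2 := by
    rw [← inner_self_eq_norm_sq (𝕜 := ℂ)]; rfl
  have h7 : ((inner ℂ b' b')).re = ‖b'‖ ^ 2 := by
    rw [← inner_self_eq_norm_sq (𝕜 := ℂ)]; rfl
  rw [h6, h7]
  have h5 : ((inner ℂ a' b')).re ^ 2 ≤ ‖(inner ℂ a' b')‖ ^ 2 := by
    set z := (inner ℂ a' b')
    have hz : ‖z‖ ^ 2 = z.re ^ 2 + z.im ^ 2 := by
      rw [Complex.sq_norm, Complex.normSq_apply]; ring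
    nlinarith [sq_nonneg z.im]
  calc ((inner ℂ a' b')).re ^ 2 ≤ ‖(inner ℂ a' b')‖ ^ 2 := h5
    _ ≤ (‖a'‖ * ‖b'‖) ^ 2 := by
        apply pow_le_pow_left₀ (norm_nonneg _) h4
    _ = ‖a'‖ ^ 2 * ‖b'‖ ^ 2 := by ring

lemma qf_inv_shift_mono {M N : Matrix ι ι ℂ} (hM : M.PosSemidef) (hN : N.PosSemidef)
    (hMN : (N - M).PosSemidef) {t : ℝ} (ht : 0 < t) (v : ι → ℂ) :
    (dotProduct (star v) ((hN.1.cfc (fun x => (x + t)⁻¹)) *ᵥ v)).re ≤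
      (dotProduct (star v) ((hM.1.cfc (fun x => (x + t)⁻¹)) *ᵥ v)).re := by
  set P := hM.1.cfc (fun x => (x + t)⁻¹) with hP
  set Q := hN.1.cfc (fun x => (x + t)⁻¹) with hQ
  set A' := hM.1.cfc (fun x => x + t) with hA'
  set B' := hN.1.cfc (fun x => x + t) with hB'
  have hMe : ∀ i, 0 ≤ hM.1.eigenvalues i := fun i => hM.eigenvalues_nonneg i
  have hNe : ∀ i, 0 ≤ hN.1.eigenvalues i := fun i => hN.eigenvalues_nonneg i
  have hPpsd : P.PosSemidef := cfc_psd hM.1 _ (fun i => by have := hMe i; positivity)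
  have hQpsd : Q.PosSemidef := cfc_psd hN.1 _ (fun i => by have := hNe i; positivity)
  have hA'psd : A'.PosSemidef := cfc_psd hM.1 _ (fun i => by have := hMe i; positivity)
  have hB'psd : B'.PosSemidef := cfc_psd hN.1 _ (fun i => by have := hNe i; positivity)
  have hA'P : A' * P = 1 := by
    rw [hA', hP, cfc_mul hM.1]
    rw [cfc_congr hM.1 (g := fun _ => 1) (fun i => by
      have h1 : hM.1.eigenvalues i + t ≠ 0 := by have := hMe i; positivity
      field_simp)]
    exact cfc_one hM.1
  have hB'Q : B' * Q = 1 := by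
    rw [hB', hQ, cfc_mul hN.1]
    rw [cfc_congr hN.1 (g := fun _ => 1) (fun i => by
      have h1 : hN.1.eigenvalues i + t ≠ 0 := by have := hNe i; positivity
      field_simp)]
    exact cfc_one hN.1
  have hBA : B' - A' = N - M := by
    rw [hA', hB', cfc_shift hM.1 t, cfc_shift hN.1 t]
    abel
  set x := Q *ᵥ v with hx
  set y := P *ᵥ v with hy
  set q := (dotProduct (star v) (Q *ᵥ v)).re with hq
  set p := (dotProduct (star v) (P *ᵥ v)).re with hpd
  have hq0 : 0 ≤ q := hQpsd.re_dotProduct_nonneg v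
  have hp0 : 0 ≤ p := hPpsd.re_dotProduct_nonneg v
  have key : ∀ (R : Matrix ι ι ℂ) (hR : R.IsHermitian) (u : ι → ℂ) (C : Matrix ι ι ℂ)
      (hCR : C * R = 1), dotProduct (star (R *ᵥ u)) (C *ᵥ (R *ᵥ u))
        = dotProduct (star u) (R *ᵥ u) := by
    intro R hR u C hCR
    rw [Matrix.mulVec_mulVec, hCR, Matrix.one_mulVec]
    rw [Matrix.star_mulVec, hR.eq, Matrix.dotProduct_mulVec]
  have e1 : dotProduct (star x) (A' *ᵥ y) = dotProduct (star v) (Q *ᵥ v) := by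
    rw [hy, Matrix.mulVec_mulVec, hA'P, Matrix.one_mulVec, hx]
    rw [Matrix.star_mulVec, Matrix.dotProduct_mulVec, (cfc_herm hN.1 _ : Q.IsHermitian).eq,
      ← Matrix.dotProduct_mulVec]
  have e2 : dotProduct (star y) (A' *ᵥ y) = dotProduct (star v) (P *ᵥ v) := by
    have := key P (cfc_herm hM.1 _) v A' hA'P
    rw [hy]
    exact this
  have e3 : dotProduct (star x) (B' *ᵥ x) = dotProduct (star v) (Q *ᵥ v) := by
    have := key Q (cfc_herm hN.1 _) v B' hB'Q
    rw [hx]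
    exact this
  have hcs := cs hA'psd x y
  rw [e1, e2] at hcs
  have hxAB : (dotProduct (star x) (A' *ᵥ x)).re ≤ q := by
    have h0 := hMN.re_dotProduct_nonneg x
    rw [← hBA, Matrix.sub_mulVec, dotProduct_sub, map_sub] at h0
    simp only [RCLike.re_to_complex] at h0
    rw [e3] at h0
    linarith [h0]
  have hxA0 : 0 ≤ (dotProduct (star x) (A' *ᵥ x)).re := hA'psd.re_dotProduct_nonneg x
  have hq2 : q ^ 2 ≤ q * p := by
    calc q ^ 2 ≤ (dotProduct (star x) (A' *ᵥ x)).re * p := hcs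
      _ ≤ q * p := mul_le_mul_of_nonneg_right hxAB hp0
  rcases eq_or_lt_of_le hq0 with h | h
  · rw [← h]; exact hp0
  · nlinarith

end CFC

section Integrals
open MeasureTheory Set


/-- integrand of the rpow integral representation -/
def kf (s lam t : ℝ) : ℝ := t ^ (s - 1) * (lam / (lam + t))

/-- normalization constant -/
def F1 (s : ℝ) : ℝ := ∫ t in Ioi (0:ℝ), kf s 1 t

variable {s lam : ℝ}

lemma kf_integrable (hs0 : 0 < s) (hs1 : s < 1) (hlam : 0 ≤ lam) :
    IntegrableOn (kf s lam) (Ioi (0:ℝ)) := by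
  rcases eq_or_lt_of_le hlam with h | hl
  · have : kf s lam = fun _ => 0 := by
      funext t; rw [kf, ← h]; simp
    rw [this]
    exact integrableOn_zero
  have hconts : ContinuousOn (kf s lam) (Ioi 0) := by
    intro t ht
    apply ContinuousAt.continuousWithinAt
    have htpos : (0:ℝ) < t := ht
    have h1 : ContinuousAt (fun u : ℝ => u ^ (s-1)) t :=
      Real.continuousAt_rpow_const t (s-1) (Or.inl (ne_of_gt htpos))
    have h2 : ContinuousAt (fun u : ℝ => lam / (lam + u)) t := by
      apply ContinuousAt.div continuousAt_const (continuousAt_const.add continuousAt_id)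
      have : (0:ℝ) < lam + t := by positivity
      simpa using this.ne'
    exact h1.mul h2
  have hIoc : IntegrableOn (kf s lam) (Ioc 0 1) := by
    have hi1 : IntegrableOn (fun t : ℝ => t ^ (s-1)) (Ioc 0 1) := by
      have h := intervalIntegral.intervalIntegrable_rpow' (a := 0) (b := 1) (r := s-1)
        (by linarith)
      rwa [intervalIntegrable_iff_integrableOn_Ioc_of_le zero_le_one] at h
    refine MeasureTheory.Integrable.mono hi1 ?_ ?_
    · exact ((hconts.mono Ioc_subset_Ioi_self).aestronglyMeasurable measurableSet_Ioc)
    · filter_upwards [ae_restrict_mem measurableSet_Ioc] with t ht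
      have htpos : (0:ℝ) < t := ht.1
      have hlt : (0:ℝ) < lam + t := by positivity
      rw [Real.norm_of_nonneg (by rw [kf]; positivity),
        Real.norm_of_nonneg (by positivity), kf]
      have hle1 : lam / (lam + t) ≤ 1 := by
        rw [div_le_one hlt]; linarith
      nlinarith [Real.rpow_nonneg htpos.le (s-1)]
  have hIoi : IntegrableOn (kf s lam) (Ioi 1) := by
    have hi2 : IntegrableOn (fun t : ℝ => lam * t ^ (s-2)) (Ioi 1) :=
      (integrableOn_Ioi_rpow_of_lt (by linarith) one_pos).const_mul lam
    refine MeasureTheory.Integrable.mono hi2 ?_ ?_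
    · exact ((hconts.mono fun t (ht : (1:ℝ) < t) => lt_trans zero_lt_one ht).aestronglyMeasurable
        measurableSet_Ioi)
    · filter_upwards [ae_restrict_mem measurableSet_Ioi] with t ht
      have ht1 : (1:ℝ) < t := ht
      have htpos : (0:ℝ) < t := lt_trans zero_lt_one ht1
      have hlt : (0:ℝ) < lam + t := by positivity
      have e : t ^ (s-1) = t ^ (s-2) * t := by
        rw [← Real.rpow_add_one (ne_of_gt htpos) (s-2)]; ring_nf
      rw [Real.norm_of_nonneg (by rw [kf]; positivity),
        Real.norm_of_nonneg (by positivity), kf, e]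
      have key2 : t * (lam / (lam + t)) ≤ lam := by
        rw [mul_div_assoc', div_le_iff₀ hlt]
        nlinarith [sq_nonneg lam]
      calc t ^ (s-2) * t * (lam / (lam + t)) = t ^ (s-2) * (t * (lam / (lam + t))) := by ring
        _ ≤ t ^ (s-2) * lam := mul_le_mul_of_nonneg_left key2 (Real.rpow_nonneg htpos.le _)
        _ = lam * t ^ (s-2) := by ring
  have h := hIoc.union hIoi
  rwa [Set.Ioc_union_Ioi_eq_Ioi zero_le_one] at h

lemma kf_integral (hs0 : 0 < s) (hs1 : s < 1) (hlam : 0 < lam) :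
    ∫ t in Ioi (0:ℝ), kf s lam t = lam ^ s * F1 s := by
  have h := MeasureTheory.integral_comp_mul_left_Ioi (kf s lam) 0 hlam
  rw [mul_zero] at h
  have h2 : EqOn (fun x => kf s lam (lam * x)) (fun x => lam ^ (s-1) * kf s 1 x) (Ioi 0) := by
    intro x hx
    have hxpos : (0:ℝ) < x := hx
    simp only [kf]
    rw [Real.mul_rpow hlam.le hxpos.le]
    have e1 : lam + lam * x = lam * (1 + x) := by ring
    rw [e1]
    have h1x : (0:ℝ) < 1 + x := by positivity
    field_simp
  rw [setIntegral_congr_fun measurableSet_Ioi h2, MeasureTheory.integral_const_mul] at h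
  have hF : F1 s = ∫ x in Ioi (0:ℝ), kf s 1 x := rfl
  rw [← hF] at h
  -- h : lam ^ (s-1) * F1 s = lam⁻¹ • ∫ t in Ioi 0, kf s lam t
  rw [smul_eq_mul] at h
  have hinv : lam * (lam ^ (s-1) * F1 s) = ∫ t in Ioi (0:ℝ), kf s lam t := by
    rw [h]; field_simp
  rw [← hinv, ← mul_assoc]
  congr 1
  rw [mul_comm, ← Real.rpow_add_one (ne_of_gt hlam) (s-1)]
  ring_nf

lemma F1_pos (hs0 : 0 < s) (hs1 : s < 1) : 0 < F1 s := by
  rw [F1]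
  have hi : IntegrableOn (kf s 1) (Ioi (0:ℝ)) := kf_integrable hs0 hs1 zero_le_one
  have hnn : 0 ≤ᵐ[volume.restrict (Ioi (0:ℝ))] (kf s 1) := by
    filter_upwards [ae_restrict_mem measurableSet_Ioi] with t ht
    have htpos : (0:ℝ) < t := ht
    rw [kf]
    positivity
  rw [setIntegral_pos_iff_support_of_nonneg_ae hnn hi]
  have hsub : Ioo (0:ℝ) 1 ⊆ Function.support (kf s 1) ∩ Ioi 0 := by
    intro t ht
    refine ⟨?_, ht.1⟩
    have htpos : (0:ℝ) < t := ht.1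
    have : 0 < kf s 1 t := by rw [kf]; positivity
    exact ne_of_gt this
  calc (0:ENNReal) < volume (Ioo (0:ℝ) 1) := by simp [Real.volume_Ioo]
    _ ≤ _ := measure_mono hsub

lemma kf_rep (hs0 : 0 < s) (hs1 : s < 1) (hlam : 0 ≤ lam) :
    (if 0 < lam then lam ^ s else 0) * F1 s = ∫ t in Ioi (0:ℝ), kf s lam t := by
  rcases eq_or_lt_of_le hlam with h | hl
  · rw [if_neg (by rw [← h]; exact lt_irrefl 0)]
    rw [zero_mul]
    symm
    have : EqOn (kf s lam) (fun _ => (0:ℝ)) (Ioi 0) := by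
      intro t _; rw [kf, ← h]; simp
    rw [setIntegral_congr_fun measurableSet_Ioi this]
    simp
  · rw [if_pos hl, kf_integral hs0 hs1 hl]

end Integrals

section Main
open Matrix CFC MeasureTheory Set

variable {M N A B : Matrix ι ι ℂ}

lemma sum_kf_comparison {s t : ℝ} (ht : 0 < t) (lamM lamN wM wN : ι → ℝ)
    (hlamM : ∀ i, 0 ≤ lamM i) (hlamN : ∀ i, 0 ≤ lamN i)
    (hc : ∑ i, 1 * wM i = ∑ i, 1 * wN i)
    (hp : ∑ i, (lamN i + t)⁻¹ * wN i ≤ ∑ i, (lamM i + t)⁻¹ * wM i) :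
    ∑ i, wM i * kf s (lamM i) t ≤ ∑ i, wN i * kf s (lamN i) t := by
  have e : ∀ (lam w : ι → ℝ), (∀ i, 0 ≤ lam i) →
      ∑ i, w i * kf s (lam i) t
        = t ^ (s-1) * (∑ i, 1 * w i) - t * (t ^ (s-1) * (∑ i, (lam i + t)⁻¹ * w i)) := by
    intro lam w h
    have per : ∀ i, w i * kf s (lam i) t
        = t ^ (s-1) * (1 * w i) - t * (t ^ (s-1) * ((lam i + t)⁻¹ * w i)) := by
      intro i
      have h0 : lam i + t ≠ 0 := by have := h i; positivity
      rw [kf]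
      field_simp
      ring
    rw [Finset.sum_congr rfl (fun i _ => per i), Finset.sum_sub_distrib,
      ← Finset.mul_sum, ← Finset.mul_sum, ← Finset.mul_sum, ← Finset.mul_sum]
  rw [e lamM wM hlamM, e lamN wN hlamN, hc]
  have hts : 0 ≤ t ^ (s-1) := Real.rpow_nonneg ht.le _
  have h2 : t ^ (s-1) * (∑ i, (lamN i + t)⁻¹ * wN i)
      ≤ t ^ (s-1) * (∑ i, (lamM i + t)⁻¹ * wM i) := mul_le_mul_of_nonneg_left hp hts
  nlinarith [ht.le]

/-- **Löwner–Heinz** for `s ∈ (0,1)` on PSD complex matrices. -/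
lemma loewner_heinz {s : ℝ} (hs0 : 0 < s) (hs1 : s < 1)
    (hM : M.PosSemidef) (hN : N.PosSemidef) (hMN : (N - M).PosSemidef) :
    (matRpow N s - matRpow M s).PosSemidef := by
  rw [matRpow_eq hN.1, matRpow_eq hM.1]
  refine PosSemidef.of_dotProduct_mulVec_nonneg ((CFC.cfc_herm hN.1 _).sub (CFC.cfc_herm hM.1 _)) ?_
  intro v
  rw [Matrix.sub_mulVec, dotProduct_sub, CFC.cfc_qf, CFC.cfc_qf, ← Complex.ofReal_sub]
  rw [Complex.zero_le_real, sub_nonneg]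
  set lamM := hM.1.eigenvalues
  set lamN := hN.1.eigenvalues
  set wM := wt hM.1 v
  set wN := wt hN.1 v
  have hlamM : ∀ i, 0 ≤ lamM i := fun i => hM.eigenvalues_nonneg i
  have hlamN : ∀ i, 0 ≤ lamN i := fun i => hN.eigenvalues_nonneg i
  have hwM : ∀ i, 0 ≤ wM i := fun i => wt_nonneg hM.1 v i
  have hwN : ∀ i, 0 ≤ wN i := fun i => wt_nonneg hN.1 v i
  -- masses agree
  have hmass : ∑ i, 1 * wM i = ∑ i, 1 * wN i := by
    have h1 := CFC.cfc_qf hM.1 (fun _ => 1) v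
    have h2 := CFC.cfc_qf hN.1 (fun _ => 1) v
    rw [CFC.cfc_one hM.1] at h1
    rw [CFC.cfc_one hN.1] at h2
    have := h1.symm.trans h2
    exact_mod_cast this
  -- reduce to integral comparison
  have hF1 : 0 < F1 s := F1_pos hs0 hs1
  rw [← mul_le_mul_iff_of_pos_right hF1]
  have hrep : ∀ (lam w : ι → ℝ), (∀ i, 0 ≤ lam i) → (∀ i, 0 ≤ w i) →
      (∑ i, (if 0 < lam i then lam i ^ s else 0) * w i) * F1 s
        = ∫ t in Ioi (0:ℝ), ∑ i, w i * kf s (lam i) t := by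
    intro lam w hlam hw
    rw [Finset.sum_mul]
    have per : ∀ i, ((if 0 < lam i then lam i ^ s else 0) * w i) * F1 s
        = ∫ t in Ioi (0:ℝ), w i * kf s (lam i) t := by
      intro i
      rw [MeasureTheory.integral_const_mul]
      rw [← kf_rep hs0 hs1 (hlam i)]
      ring
    rw [Finset.sum_congr rfl (fun i _ => per i)]
    rw [← MeasureTheory.integral_finset_sum]
    intro i _
    exact (kf_integrable hs0 hs1 (hlam i)).const_mul (w i)
  rw [hrep lamM wM hlamM hwM, hrep lamN wN hlamN hwN]
  have hintM : IntegrableOn (fun t => ∑ i, wM i * kf s (lamM i) t) (Ioi (0:ℝ)) :=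
    MeasureTheory.integrable_finset_sum _ (fun i _ =>
      (kf_integrable hs0 hs1 (hlamM i)).const_mul (wM i))
  have hintN : IntegrableOn (fun t => ∑ i, wN i * kf s (lamN i) t) (Ioi (0:ℝ)) :=
    MeasureTheory.integrable_finset_sum _ (fun i _ =>
      (kf_integrable hs0 hs1 (hlamN i)).const_mul (wN i))
  refine MeasureTheory.setIntegral_mono_on hintM hintN measurableSet_Ioi ?_
  intro t ht
  have htpos : (0:ℝ) < t := ht
  refine sum_kf_comparison htpos lamM lamN wM wN hlamM hlamN hmass ?_
  -- resolvent comparison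
  have hmono := qf_inv_shift_mono hM hN hMN htpos v
  have hqM := CFC.cfc_qf hM.1 (fun x => (x + t)⁻¹) v
  have hqN := CFC.cfc_qf hN.1 (fun x => (x + t)⁻¹) v
  rw [hqM, hqN, Complex.ofReal_re, Complex.ofReal_re] at hmono
  exact hmono

lemma matRpow_psd (hA : A.PosSemidef) (s : ℝ) : (matRpow A s).PosSemidef := by
  rw [matRpow_eq hA.1]
  refine CFC.cfc_psd hA.1 _ (fun i => ?_)
  split
  · exact Real.rpow_nonneg (hA.eigenvalues_nonneg i) s
  · exact le_refl 0

lemma matRpow_mul_matRpow (hA : A.PosSemidef) {s : ℝ} :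
    matRpow A s * matRpow A (1 - s) = A := by
  rw [matRpow_eq hA.1, matRpow_eq hA.1, CFC.cfc_mul]
  rw [CFC.cfc_congr hA.1 (g := fun x => x) (fun i => ?_), CFC.cfc_id]
  rcases lt_or_ge 0 (hA.1.eigenvalues i) with h | h
  · rw [if_pos h, if_pos h, ← Real.rpow_add h]
    norm_num
  · have h0 : hA.1.eigenvalues i = 0 := le_antisymm h (hA.eigenvalues_nonneg i)
    rw [if_neg (by rw [h0]; exact lt_irrefl 0), h0, zero_mul]

/-- The key trace inequality, `s ∈ (0,1)`. -/
lemma key_chain {s : ℝ} (hs0 : 0 < s) (hs1 : s < 1)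
    (hA : A.PosSemidef) (hB : B.PosSemidef) :
    (1 / 2) * ((A.trace).re + (B.trace).re - traceNorm (A - B))
      ≤ ((matRpow A s * matRpow B (1 - s)).trace).re := by
  have hD : (B - A).IsHermitian := hB.1.sub hA.1
  set Dp := hD.cfc (fun x => max x 0) with hDpdef
  set Dm := hD.cfc (fun x => max (-x) 0) with hDmdef
  have hDp : Dp.PosSemidef := CFC.cfc_psd hD _ (fun i => le_max_right _ _)
  have hDm : Dm.PosSemidef := CFC.cfc_psd hD _ (fun i => le_max_right _ _)
  have hsub : Dp - Dm = B - A := by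
    rw [hDpdef, hDmdef, CFC.cfc_sub]
    rw [CFC.cfc_congr hD (g := fun x => x) (fun i => ?_), CFC.cfc_id]
    rcases le_total 0 (hD.eigenvalues i) with h | h
    · rw [max_eq_left h, max_eq_right (neg_nonpos.mpr h), sub_zero]
    · rw [max_eq_right h, max_eq_left (neg_nonneg.mpr h), zero_sub, neg_neg]
  -- trace norm identity
  have htn : traceNorm (A - B) = (Dp.trace).re + (Dm.trace).re := by
    have hABH : (A - B).IsHermitian := hA.1.sub hB.1
    have hsq : (hD.cfc (fun x => |x|)) ^ 2 = (A - B)ᴴ * (A - B) := by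
      rw [hABH.eq, sq, CFC.cfc_mul]
      have e1 : A - B = -(B - A) := (neg_sub B A).symm
      have e2 : (A - B) * (A - B) = (B - A) * (B - A) := by
        rw [e1, neg_mul_neg]
      rw [e2]
      conv_rhs => rw [← CFC.cfc_id hD]
      rw [CFC.cfc_mul]
      exact CFC.cfc_congr hD (fun i => abs_mul_abs_self _)
    have habs : hD.cfc (fun x => |x|) = psdSqrt (Matrix.posSemidef_conjTranspose_mul_self (A - B)) :=
      eq_psdSqrt_of_sq_eq (CFC.cfc_psd hD _ (fun i => abs_nonneg _))
        (Matrix.posSemidef_conjTranspose_mul_self (A - B)) hsq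
    rw [traceNorm, ← habs, CFC.cfc_trace]
    rw [hDpdef, hDmdef, CFC.cfc_trace, CFC.cfc_trace]
    rw [Complex.ofReal_re, Complex.ofReal_re, Complex.ofReal_re, ← Finset.sum_add_distrib]
    refine Finset.sum_congr rfl fun i _ => ?_
    rcases le_total 0 (hD.eigenvalues i) with h | h
    · rw [abs_of_nonneg h, max_eq_left h, max_eq_right (neg_nonpos.mpr h), add_zero]
    · rw [abs_of_nonpos h, max_eq_right h, max_eq_left (neg_nonneg.mpr h), zero_add]
  -- trace relation
  have htr : (Dp.trace).re - (Dm.trace).re = (B.trace).re - (A.trace).re := by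
    have := congrArg (fun M : Matrix ι ι ℂ => (M.trace).re) hsub
    simpa [Matrix.trace_sub, Complex.sub_re] using this
  -- C := A + Dp
  set C := A + Dp with hCdef
  have hC : C.PosSemidef := hA.add hDp
  have hCA : (C - A).PosSemidef := by
    have : C - A = Dp := by rw [hCdef]; abel
    rw [this]; exact hDp
  have hCB : (C - B).PosSemidef := by
    have : C - B = Dm := by
      have h' : Dp = B - A + Dm := sub_eq_iff_eq_add.mp hsub
      rw [hCdef, h']; abel
    rw [this]; exact hDm
  have hs0' : 0 < 1 - s := by linarith
  have hs1' : 1 - s < 1 := by linarith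
  -- Löwner–Heinz inequalities
  have LH1 : (matRpow C s - matRpow A s).PosSemidef := loewner_heinz hs0 hs1 hA hC hCA
  have LH2 : (matRpow C (1-s) - matRpow B (1-s)).PosSemidef := loewner_heinz hs0' hs1' hB hC hCB
  have LH3 : (matRpow C (1-s) - matRpow A (1-s)).PosSemidef := loewner_heinz hs0' hs1' hA hC hCA
  have LH4 : (matRpow C s - matRpow B s).PosSemidef := loewner_heinz hs0 hs1 hB hC hCB
  -- chain
  have step1 : (B.trace).re = ((matRpow B s * matRpow B (1-s)).trace).re := by
    rw [matRpow_mul_matRpow hB]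
  have step2 : ((matRpow B s * matRpow B (1-s)).trace).re
      - ((matRpow A s * matRpow B (1-s)).trace).re
      = (((matRpow B s - matRpow A s) * matRpow B (1-s)).trace).re := by
    rw [Matrix.sub_mul, Matrix.trace_sub, Complex.sub_re]
  have step3 : (((matRpow B s - matRpow A s) * matRpow B (1-s)).trace).re
      ≤ (((matRpow C s - matRpow A s) * matRpow B (1-s)).trace).re := by
    refine trace_re_mono ?_ (matRpow_psd hB (1-s))
    have e : matRpow C s - matRpow A s - (matRpow B s - matRpow A s)
        = matRpow C s - matRpow B s := by abel
    rw [e]; exact LH4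
  have step4 : (((matRpow C s - matRpow A s) * matRpow B (1-s)).trace).re
      ≤ (((matRpow C s - matRpow A s) * matRpow C (1-s)).trace).re := by
    rw [Matrix.trace_mul_comm (matRpow C s - matRpow A s) (matRpow B (1-s)),
      Matrix.trace_mul_comm (matRpow C s - matRpow A s) (matRpow C (1-s))]
    refine trace_re_mono LH2 ?_
    have : (matRpow C s - matRpow A s).PosSemidef := LH1
    exact this
  have step5 : (((matRpow C s - matRpow A s) * matRpow C (1-s)).trace).re
      = (C.trace).re - ((matRpow A s * matRpow C (1-s)).trace).re := by
    rw [Matrix.sub_mul, Matrix.trace_sub, Complex.sub_re, matRpow_mul_matRpow hC]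
  have step6 : (A.trace).re ≤ ((matRpow A s * matRpow C (1-s)).trace).re := by
    have h := trace_re_mono LH3 (matRpow_psd hA s)
    rw [Matrix.trace_mul_comm (matRpow A (1-s)) (matRpow A s),
      Matrix.trace_mul_comm (matRpow C (1-s)) (matRpow A s)] at h
    calc (A.trace).re = ((matRpow A s * matRpow A (1-s)).trace).re := by
          rw [matRpow_mul_matRpow hA]
      _ ≤ _ := h
  have step7 : (C.trace).re = (A.trace).re + (Dp.trace).re := by
    rw [hCdef, Matrix.trace_add, Complex.add_re]
  rw [htn]
  linarith

lemma cont_aux (c : ℝ) : Continuous fun s : ℝ => ((if 0 < c then c ^ s else 0 : ℝ) : ℂ) := by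
  apply Complex.continuous_ofReal.comp
  by_cases h : 0 < c
  · simp only [if_pos h]
    have e : (fun s : ℝ => c ^ s) = fun s : ℝ => Real.exp (Real.log c * s) := by
      funext s; rw [Real.rpow_def_of_pos h]
    rw [e]
    exact Real.continuous_exp.comp (continuous_const.mul continuous_id)
  · simp only [if_neg h]; exact continuous_const

lemma matRpow_apply {A : Matrix ι ι ℂ} (hA : A.IsHermitian) (s : ℝ) (i j : ι) :
    matRpow A s i j = ∑ l, (hA.eigenvectorUnitary : Matrix ι ι ℂ) i l *
      ((if 0 < hA.eigenvalues l then hA.eigenvalues l ^ s else 0 : ℝ) : ℂ) *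
      (star (hA.eigenvectorUnitary : Matrix ι ι ℂ)) l j := by
  rw [matRpow, dif_pos hA, Matrix.mul_apply]
  refine Finset.sum_congr rfl fun l _ => ?_
  rw [Matrix.mul_diagonal]

lemma Qs_cont {A B : Matrix ι ι ℂ} (hA : A.IsHermitian) (hB : B.IsHermitian) :
    Continuous fun s : ℝ => Qs s A B := by
  have hrw : (fun s : ℝ => Qs s A B) = fun s : ℝ =>
      (∑ i, ∑ j, (∑ l, (hA.eigenvectorUnitary : Matrix ι ι ℂ) i l *
        ((if 0 < hA.eigenvalues l then hA.eigenvalues l ^ s else 0 : ℝ) : ℂ) *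
        (star (hA.eigenvectorUnitary : Matrix ι ι ℂ)) l j) *
        (∑ l, (hB.eigenvectorUnitary : Matrix ι ι ℂ) j l *
        ((if 0 < hB.eigenvalues l then hB.eigenvalues l ^ (1-s) else 0 : ℝ) : ℂ) *
        (star (hB.eigenvectorUnitary : Matrix ι ι ℂ)) l i)).re := by
    funext s
    rw [Qs, Matrix.trace]
    congr 1
    simp only [Matrix.diag, Matrix.mul_apply, matRpow_apply hA, matRpow_apply hB]
  rw [hrw]
  apply Complex.continuous_re.comp
  apply continuous_finset_sum; intro i _
  apply continuous_finset_sum; intro j _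
  apply Continuous.mul
  · apply continuous_finset_sum; intro l _
    exact (continuous_const.mul (cont_aux _)).mul continuous_const
  · apply continuous_finset_sum; intro l _
    refine (continuous_const.mul ?_).mul continuous_const
    exact (cont_aux _).comp (continuous_const.sub continuous_id)

end Main

/-- **Quantum Chernoff bound** (Audenaert et al.): for positive semidefinite
`A, B` and every `s ∈ [0,1]`,
`(1/2)(Tr A + Tr B − ‖A−B‖₁) ≤ Tr[A^s B^{1-s}]`; equivalently the left-hand
side is at most `Q_min(A‖B)`. -/
theorem quantum_chernoff_bound {ι : Type*} [Fintype ι] [DecidableEq ι]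
    (A B : Matrix ι ι ℂ) (hA : A.PosSemidef) (hB : B.PosSemidef) :
    (∀ s ∈ Set.Icc (0 : ℝ) 1,
      (1 / 2) * ((A.trace).re + (B.trace).re - traceNorm (A - B)) ≤ Qs s A B) ∧
    (1 / 2) * (((A + B).trace).re - traceNorm (A - B)) ≤ Qmin A B := by
  have hQB : ∀ s ∈ Set.Icc (0:ℝ) 1,
      (1/2) * ((A.trace).re + (B.trace).re - traceNorm (A - B)) ≤ Qs s A B := by
    have hcont : Continuous fun s : ℝ => Qs s A B := Qs_cont hA.1 hB.1
    have hclosed : IsClosed {s : ℝ |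
        (1/2) * ((A.trace).re + (B.trace).re - traceNorm (A - B)) ≤ Qs s A B} :=
      isClosed_le continuous_const hcont
    have hIoo : Set.Ioo (0:ℝ) 1 ⊆ {s : ℝ |
        (1/2) * ((A.trace).re + (B.trace).re - traceNorm (A - B)) ≤ Qs s A B} := by
      intro s hs
      have h := key_chain hs.1 hs.2 hA hB
      simpa [Qs] using h
    intro s hs
    have hscl : s ∈ closure (Set.Ioo (0:ℝ) 1) := by
      rw [closure_Ioo (zero_ne_one)]; exact hs
    exact (closure_minimal hIoo hclosed) hscl
  refine ⟨hQB, ?_⟩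
  have hne : {x : ℝ | ∃ s ∈ Set.Icc (0:ℝ) 1, x = Qs s A B}.Nonempty :=
    ⟨Qs 0 A B, 0, ⟨le_refl 0, zero_le_one⟩, rfl⟩
  rw [Qmin]
  refine le_csInf hne ?_
  rintro x ⟨s, hs, rfl⟩
  have h := hQB s hs
  rw [Matrix.trace_add, Complex.add_re]
  exact h

end QHT

end
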